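/- Let K be a perfect field and let A, B ∈ GL(3,K) be conjugate matrices such that A has no eigenvalue in K. Then A⁻¹B is not equal to the 3×3 matrix with 1's on the diagonal, a 1 in position (2,1), and 0 elsewhere (i.e., the unipotent matrix with a single Jordan block of size 2 and one of size 1). -/

import Mathlib

/-- **Proposition 1.1.** Over a perfect field `K`, if `A ∼ B` in `GL(3,K)` and `A` has no
eigenvalue in `K`, then `A⁻¹ B` is not the unipotent matrix with Jordan blocks of sizes 2, 1. -/
theorem inv_mul_ne_unipotent {K : Type*} [Field K] [PerfectField K]
    (A B : (Matrix (Fin 3) (Fin 3) K)ˣ)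
    (hconj : IsConj A B)
    (hev : ∀ lam : K,
      ((A : Matrix (Fin 3) (Fin 3) K) - lam • (1 : Matrix (Fin 3) (Fin 3) K)).det ≠ 0) :
    ((A⁻¹ * B : (Matrix (Fin 3) (Fin 3) K)ˣ) : Matrix (Fin 3) (Fin 3) K) ≠
      !![(1 : K), 0, 0; 1, 1, 0; 0, 0, 1] := by
  intro h
  set a : Matrix (Fin 3) (Fin 3) K := (A : Matrix (Fin 3) (Fin 3) K) with ha
  -- B = A * U as matrices
  have hB : (B : Matrix (Fin 3) (Fin 3) K) = a * !![(1 : K), 0, 0; 1, 1, 0; 0, 0, 1] := by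
    rw [← h, ← Units.val_mul, mul_inv_cancel_left]
  obtain ⟨P', hP⟩ := hconj
  set Q : (Matrix (Fin 3) (Fin 3) K)ˣ := (P' : (Matrix (Fin 3) (Fin 3) K)ˣ) with hQdef
  have hQB : Q * A * Q⁻¹ = B := by
    rw [hP.eq]; group
  have hPB : (B : Matrix (Fin 3) (Fin 3) K) = (Q : Matrix (Fin 3) (Fin 3) K) * a *
      ((Q⁻¹ : (Matrix (Fin 3) (Fin 3) K)ˣ) : Matrix (Fin 3) (Fin 3) K) := by
    rw [← hQB, Units.val_mul, Units.val_mul]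
  -- trace equality
  have h1 : Matrix.trace (B : Matrix (Fin 3) (Fin 3) K) = Matrix.trace a := by
    rw [hPB, Matrix.trace_units_conj]
  -- trace of adjugate equality
  have hadj1 : (Matrix.adjugate ((Q : Matrix (Fin 3) (Fin 3) K))) *
      Matrix.adjugate ((Q⁻¹ : (Matrix (Fin 3) (Fin 3) K)ˣ) : Matrix (Fin 3) (Fin 3) K) = 1 := by
    rw [← Matrix.adjugate_mul_distrib, ← Units.val_mul, inv_mul_cancel, Units.val_one,
      Matrix.adjugate_one]
  have h2 : Matrix.trace (Matrix.adjugate (B : Matrix (Fin 3) (Fin 3) K)) =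
      Matrix.trace (Matrix.adjugate a) := by
    rw [hPB, Matrix.adjugate_mul_distrib, Matrix.adjugate_mul_distrib, Matrix.trace_mul_comm,
      mul_assoc, hadj1, mul_one]
  -- concrete form of A * U
  have haU : a * !![(1 : K), 0, 0; 1, 1, 0; 0, 0, 1] =
      !![a 0 0 + a 0 1, a 0 1, a 0 2; a 1 0 + a 1 1, a 1 1, a 1 2;
         a 2 0 + a 2 1, a 2 1, a 2 2] := by
    ext i j
    fin_cases i <;> fin_cases j <;>
      simp [Matrix.mul_apply, Fin.sum_univ_three]
  rw [hB, haU] at h1 h2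
  rw [Matrix.trace_fin_three_of, Matrix.trace_fin_three] at h1
  rw [Matrix.adjugate_fin_three_of, Matrix.trace_fin_three_of,
    Matrix.adjugate_fin_three, Matrix.trace_fin_three_of] at h2
  have h01 : a 0 1 = 0 := by linear_combination h1
  have h0221 : a 0 2 * a 2 1 = 0 := by linear_combination - h2 + a 2 2 * h01
  rcases mul_eq_zero.mp h0221 with h02 | h21
  · apply hev (a 0 0)
    rw [Matrix.one_fin_three, Matrix.det_fin_three]
    simp [Matrix.sub_apply]
    simp only [h01, h02]
    ring
  · apply hev (a 1 1)
    rw [Matrix.one_fin_three, Matrix.det_fin_three]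
    simp [Matrix.sub_apply]
    simp only [h01, h21]
    ring
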